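/- Let X be a locally finite simplicial complex, G a group of simplicial automorphisms of X acting with finite stabilizers, and for 0 ≤ l < k let f(τ,σ) be a G-invariant real-valued function on pairs (τ,σ) where τ is an ordered l-simplex contained in an ordered k-simplex σ. If Σ(k,G) denotes a set of representatives of G-orbits on ordered k-simplices, then Σ_{σ ∈ Σ(k,G)} Σ_{τ ⊂ σ} f(τ,σ)/|G_σ| = Σ_{τ ∈ Σ(l,G)} Σ_{σ ⊃ τ} f(τ,σ)/|G_τ|, where |G_σ|, |G_τ| denote the cardinalities of the stabilizers. -/

import Mathlib

/-- An abstract simplicial complex on a vertex type `V`. -/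
structure SComplex (V : Type*) where
  faces : Set (Finset V)
  not_empty_mem : ∅ ∉ faces
  down_closed : ∀ s ∈ faces, ∀ t, t ⊆ s → t ≠ ∅ → t ∈ faces

namespace SComplex

variable {V : Type*} (X : SComplex V)

/-- Local finiteness: every vertex lies in only finitely many faces. -/
def LocallyFinite : Prop := ∀ v : V, {s ∈ X.faces | v ∈ s}.Finite

/-- The group of simplicial automorphisms, as a subgroup of `Equiv.Perm V`. -/
def aut : Subgroup (Equiv.Perm V) where
  carrier := {g | ∀ s : Finset V, s ∈ X.faces ↔ s.map g.toEmbedding ∈ X.faces}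
  one_mem' := by
    intro s
    have : (1 : Equiv.Perm V).toEmbedding = Function.Embedding.refl V := by
      ext v; rfl
    rw [this, Finset.map_refl]
  mul_mem' := by
    intro a b ha hb s
    rw [hb s, ha (s.map b.toEmbedding), Finset.map_map]
    rfl
  inv_mem' := by
    intro a ha s
    have h := ha (s.map (a⁻¹ : Equiv.Perm V).toEmbedding)
    rw [Finset.map_map] at h
    have : ((a⁻¹ : Equiv.Perm V).toEmbedding.trans a.toEmbedding) =
        Function.Embedding.refl V := by
      ext v; simp
    rw [this, Finset.map_refl] at h
    exact h.symm

/-- The compact-open topology on `Equiv.Perm V` for a discrete vertex set: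
the topology induced by pointwise convergence of a permutation and its inverse. -/
def permTop (V : Type*) : TopologicalSpace (Equiv.Perm V) :=
  letI : TopologicalSpace V := ⊥
  TopologicalSpace.induced
    (fun g : Equiv.Perm V => ((g : V → V), ((g.symm : V → V)))) inferInstance

scoped instance instPermTop (V : Type*) : TopologicalSpace (Equiv.Perm V) := permTop V

/-- `K` is (the vertex set of) a finite subcomplex of `X`. -/
def IsFiniteSubcomplexVerts (K : Finset V) : Prop := ∀ v ∈ K, ({v} : Finset V) ∈ X.faces

/-- The pointwise stabilizer of a finite set of vertices in a subgroup `G ≤ Equiv.Perm V`. -/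
def pointStab (G : Subgroup (Equiv.Perm V)) (K : Finset V) : Set G :=
  {g : G | ∀ v ∈ K, (g : Equiv.Perm V) v = v}

end SComplex

section OrderedSimplices

variable {V : Type*} [DecidableEq V] (X : SComplex V)

/-- Ordered `k`-simplices of `X`: injective `(k+1)`-tuples of vertices spanning a face. -/
def SComplex.osimp (k : ℕ) : Type _ :=
  {s : Fin (k + 1) → V // Function.Injective s ∧ Finset.univ.image s ∈ X.faces}

variable {G : Type*} [Group G]

/-- The action of `g ∈ G` on ordered `k`-simplices, for an action `act` of `G` on `X`
by simplicial automorphisms. -/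
def SComplex.gAct (act : G →* Equiv.Perm V) (hact : ∀ g : G, act g ∈ X.aut)
    {k : ℕ} (g : G) (σ : X.osimp k) : X.osimp k :=
  ⟨fun i => act g (σ.1 i), by
    refine ⟨(act g).injective.comp σ.2.1, ?_⟩
    have h := ((hact g) (Finset.univ.image σ.1)).mp σ.2.2
    rw [Finset.map_eq_image] at h
    rw [Finset.image_image] at h
    convert h using 2
    first | rfl | (funext i; simp)⟩

/-- `τ` is a face of `σ`: the vertices of `τ` are among the vertices of `σ`. -/
def SComplex.OSub {l k : ℕ} (τ : X.osimp l) (σ : X.osimp k) : Prop :=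
  Set.range τ.1 ⊆ Set.range σ.1

/-- `R` is a set of representatives of the `G`-orbits on ordered `k`-simplices. -/
def SComplex.IsOrbitReps (act : G →* Equiv.Perm V) (hact : ∀ g : G, act g ∈ X.aut)
    {k : ℕ} (R : Finset (X.osimp k)) : Prop :=
  ∀ σ : X.osimp k, ∃! σ' : X.osimp k, σ' ∈ R ∧ ∃ g : G, X.gAct act hact g σ' = σ

end OrderedSimplices

section DCAux

open SComplex

variable {V : Type*} [DecidableEq V] (X : SComplex V) {G : Type*} [Group G]
  (act : G →* Equiv.Perm V) (hact : ∀ g : G, act g ∈ X.aut)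

lemma gAct_one {m : ℕ} (σ : X.osimp m) : X.gAct act hact 1 σ = σ :=
  Subtype.ext (funext fun i => by simp [SComplex.gAct])

lemma gAct_mul {m : ℕ} (g h : G) (σ : X.osimp m) :
    X.gAct act hact (g * h) σ = X.gAct act hact g (X.gAct act hact h σ) :=
  Subtype.ext (funext fun i => by simp [SComplex.gAct, map_mul, Equiv.Perm.mul_apply])

lemma gAct_inv_left {m : ℕ} (g : G) (σ : X.osimp m) :
    X.gAct act hact g⁻¹ (X.gAct act hact g σ) = σ := by
  rw [← gAct_mul, inv_mul_cancel, gAct_one]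

lemma gAct_inv_right {m : ℕ} (g : G) (σ : X.osimp m) :
    X.gAct act hact g (X.gAct act hact g⁻¹ σ) = σ := by
  simpa using gAct_inv_left X act hact g⁻¹ σ

lemma osub_gAct {l k : ℕ} (g : G) {τ : X.osimp l} {σ : X.osimp k}
    (h : X.OSub τ σ) : X.OSub (X.gAct act hact g τ) (X.gAct act hact g σ) := by
  rintro x ⟨i, rfl⟩
  obtain ⟨j, hj⟩ := h ⟨i, rfl⟩
  exact ⟨j, by simp only [SComplex.gAct]; rw [hj]⟩

lemma finite_osub_left {l k : ℕ} (σ : X.osimp k) :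
    Finite {τ : X.osimp l // X.OSub τ σ} := by
  haveI : Finite (Set.range σ.1) := (Set.finite_range σ.1).to_subtype
  apply Finite.of_injective (fun τ : {τ : X.osimp l // X.OSub τ σ} =>
    (fun i => (⟨τ.1.1 i, τ.2 ⟨i, rfl⟩⟩ : Set.range σ.1) : Fin (l + 1) → Set.range σ.1))
  intro a b hab
  have : a.1.1 = b.1.1 := funext fun i => congrArg Subtype.val (congrFun hab i)
  exact Subtype.ext (Subtype.ext this)

lemma finite_osub_right (hlf : X.LocallyFinite) {l k : ℕ} (τ : X.osimp l) :
    Finite {σ : X.osimp k // X.OSub τ σ} := by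
  set v0 := τ.1 0 with hv0
  set U : Set V := ⋃ s ∈ {s ∈ X.faces | v0 ∈ s}, (↑s : Set V) with hU
  have hUfin : U.Finite := (hlf v0).biUnion (fun s _ => s.finite_toSet)
  haveI := hUfin.to_subtype
  have hmem : ∀ (σ' : {σ : X.osimp k // X.OSub τ σ}) (i : Fin (k + 1)), σ'.1.1 i ∈ U := by
    intro σ' i
    have hv : v0 ∈ Finset.univ.image σ'.1.1 := by
      obtain ⟨j, hj⟩ := σ'.2 ⟨0, rfl⟩
      exact Finset.mem_image.mpr ⟨j, Finset.mem_univ j, hj⟩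
    have hface : Finset.univ.image σ'.1.1 ∈ {s ∈ X.faces | v0 ∈ s} := ⟨σ'.1.2.2, hv⟩
    refine Set.mem_biUnion hface ?_
    exact Finset.mem_coe.mpr (Finset.mem_image.mpr ⟨i, Finset.mem_univ i, rfl⟩)
  apply Finite.of_injective (fun σ' : {σ : X.osimp k // X.OSub τ σ} =>
    (fun i => (⟨σ'.1.1 i, hmem σ' i⟩ : U) : Fin (k + 1) → U))
  intro a b hab
  have : a.1.1 = b.1.1 := funext fun i => congrArg Subtype.val (congrFun hab i)
  exact Subtype.ext (Subtype.ext this)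

lemma finite_gfiber {m : ℕ} (a b : X.osimp m)
    (hstab : Finite {g : G // X.gAct act hact g a = a}) :
    Finite {g : G // X.gAct act hact g a = b} := by
  rcases isEmpty_or_nonempty {g : G // X.gAct act hact g a = b} with he | ⟨⟨g0, hg0⟩⟩
  · haveI := he; infer_instance
  · apply Finite.of_injective (fun g : {g : G // X.gAct act hact g a = b} =>
      (⟨g0⁻¹ * g.1, by
        rw [gAct_mul, g.2, ← hg0, gAct_inv_left]⟩ : {g : G // X.gAct act hact g a = a}))
    intro x y hxy
    have := congrArg Subtype.val hxy
    exact Subtype.ext (mul_left_cancel this)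

lemma finite_B
    (hstabfin : ∀ (m : ℕ) (σ : X.osimp m), Finite {g : G // X.gAct act hact g σ = σ})
    {l k : ℕ} (τ0 : X.osimp l) (σ : X.osimp k) :
    Finite {g : G // X.OSub (X.gAct act hact g τ0) σ} := by
  haveI := finite_osub_left X (l := l) σ
  have hsub : {g : G | X.OSub (X.gAct act hact g τ0) σ} ⊆
      ⋃ τ' : {τ : X.osimp l // X.OSub τ σ}, {g : G | X.gAct act hact g τ0 = τ'.1} := by
    intro g hg
    exact Set.mem_iUnion.mpr ⟨⟨_, hg⟩, rfl⟩
  have hfin : Set.Finite {g : G | X.OSub (X.gAct act hact g τ0) σ} := by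
    refine Set.Finite.subset (Set.finite_iUnion fun τ' => ?_) hsub
    exact Set.finite_coe_iff.mp (finite_gfiber X act hact τ0 τ'.1 (hstabfin l τ0))
  exact hfin.to_subtype

/-- the map `(τ0, g) ↦ g • τ0` from pairs to `l`-simplices contained in `σ`. -/
def piMap {l k : ℕ} (Rl : Finset (X.osimp l)) (σ : X.osimp k)
    (q : Σ t : {x // x ∈ Rl}, {g : G // X.OSub (X.gAct act hact g t.1) σ}) :
    {τ : X.osimp l // X.OSub τ σ} :=
  ⟨X.gAct act hact q.2.1 q.1.1, q.2.2⟩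

/-- the map `(σ0, g) ↦ g⁻¹ • σ0` from pairs to `k`-simplices containing `τ0`. -/
def rhoMap {l k : ℕ} (Rk : Finset (X.osimp k)) (τ0 : X.osimp l)
    (q : Σ s : {x // x ∈ Rk}, {g : G // X.OSub (X.gAct act hact g τ0) s.1}) :
    {σ' : X.osimp k // X.OSub τ0 σ'} :=
  ⟨X.gAct act hact q.2.1⁻¹ q.1.1, by
    have h := osub_gAct X act hact q.2.1⁻¹ q.2.2
    rwa [gAct_inv_left] at h⟩

def fiber_equiv_l {l k : ℕ} (Rl : Finset (X.osimp l)) (σ : X.osimp k)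
    (rp : X.osimp l) (hmem : rp ∈ Rl) (g0 : G) (b : {τ : X.osimp l // X.OSub τ σ})
    (hg0 : X.gAct act hact g0 rp = b.1)
    (huniq : ∀ τ0 : X.osimp l, τ0 ∈ Rl → (∃ g : G, X.gAct act hact g τ0 = b.1) → τ0 = rp) :
    {q // piMap X act hact Rl σ q = b} ≃ {g : G // X.gAct act hact g rp = rp} where
  toFun q := ⟨g0⁻¹ * q.1.2.1, by
    have hv : X.gAct act hact q.1.2.1 q.1.1.1 = b.1 := congrArg Subtype.val q.2
    have h1 : q.1.1.1 = rp := huniq _ q.1.1.2 ⟨q.1.2.1, hv⟩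
    have h2 : X.gAct act hact q.1.2.1 rp = b.1 := h1 ▸ hv
    rw [gAct_mul, h2, ← hg0, gAct_inv_left]⟩
  invFun h := ⟨⟨⟨rp, hmem⟩, ⟨g0 * h.1, by
      rw [gAct_mul, h.2, hg0]; exact b.2⟩⟩,
    Subtype.ext (by simp only [piMap]; rw [gAct_mul, h.2, hg0])⟩
  left_inv := by
    rintro ⟨⟨⟨τ0, hm⟩, ⟨g, hg⟩⟩, hq⟩
    have hv : X.gAct act hact g τ0 = b.1 := congrArg Subtype.val hq
    have h1 : τ0 = rp := huniq τ0 hm ⟨g, hv⟩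
    subst h1
    have hgg : g0 * (g0⁻¹ * g) = g := mul_inv_cancel_left g0 g
    exact Subtype.ext (congrArg (Sigma.mk _) (Subtype.ext hgg))
  right_inv h := Subtype.ext (inv_mul_cancel_left g0 h.1)

def fiber_equiv_k {l k : ℕ} (Rk : Finset (X.osimp k)) (τ0 : X.osimp l)
    (rp : X.osimp k) (hmem : rp ∈ Rk) (g1 : G) (b : {σ' : X.osimp k // X.OSub τ0 σ'})
    (hg1 : X.gAct act hact g1 rp = b.1)
    (huniq : ∀ σ0 : X.osimp k, σ0 ∈ Rk → (∃ g : G, X.gAct act hact g σ0 = b.1) → σ0 = rp) :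
    {q // rhoMap X act hact Rk τ0 q = b} ≃ {g : G // X.gAct act hact g rp = rp} where
  toFun q := ⟨q.1.2.1 * g1, by
    have hv : X.gAct act hact q.1.2.1⁻¹ q.1.1.1 = b.1 := congrArg Subtype.val q.2
    have h1 : q.1.1.1 = rp := huniq _ q.1.1.2 ⟨q.1.2.1⁻¹, hv⟩
    have h2 : X.gAct act hact q.1.2.1 b.1 = rp := by
      rw [← hv, gAct_inv_right]; exact h1
    rw [gAct_mul, hg1, h2]⟩
  invFun h := ⟨⟨⟨rp, hmem⟩, ⟨h.1 * g1⁻¹, by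
      have hb : X.gAct act hact g1⁻¹ b.1 = rp := by rw [← hg1, gAct_inv_left]
      have hsub := osub_gAct X act hact (h.1 * g1⁻¹) b.2
      have h3 : X.gAct act hact (h.1 * g1⁻¹) b.1 = rp := by rw [gAct_mul, hb, h.2]
      rwa [h3] at hsub⟩⟩,
    Subtype.ext (by
      simp only [rhoMap]
      have hh : X.gAct act hact h.1⁻¹ rp = rp := by
        have h4 := gAct_inv_left X act hact h.1 rp
        rwa [h.2] at h4
      rw [mul_inv_rev, inv_inv, gAct_mul, hh, hg1])⟩
  left_inv := by
    rintro ⟨⟨⟨σ0, hm⟩, ⟨g, hg⟩⟩, hq⟩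
    have hv : X.gAct act hact g⁻¹ σ0 = b.1 := congrArg Subtype.val hq
    have h1 : σ0 = rp := huniq σ0 hm ⟨g⁻¹, hv⟩
    subst h1
    have hgg : g * g1 * g1⁻¹ = g := mul_inv_cancel_right g g1
    exact Subtype.ext (congrArg (Sigma.mk _) (Subtype.ext hgg))
  right_inv h := Subtype.ext (inv_mul_cancel_right h.1 g1)

lemma fiber_sum {α β : Type*} [Fintype α] [Fintype β] (π : α → β) (F : β → ℝ) :
    ∑ a : α, F (π a) = ∑ b : β, (Nat.card {a // π a = b} : ℝ) * F b := by
  classical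
  rw [← Fintype.sum_fiberwise π (fun a => F (π a))]
  refine Finset.sum_congr rfl fun b _ => ?_
  rw [Finset.sum_congr rfl fun (a : {a // π a = b}) _ => by rw [a.2],
    Finset.sum_const, Nat.card_eq_fintype_card, ← Finset.card_univ, nsmul_eq_mul]

lemma cancel_aux (n : ℕ) (hn : 0 < n) (c x : ℝ) :
    (n : ℝ) * (x / (c * n)) = x / c := by
  have h : (n : ℝ) ≠ 0 := Nat.cast_ne_zero.mpr hn.ne'
  rcases eq_or_ne c 0 with rfl | hc
  · simp
  · field_simp

lemma cancel_aux' (n : ℕ) (hn : 0 < n) (c x : ℝ) :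
    (n : ℝ) * (x / ((n : ℝ) * c)) = x / c := by
  rw [mul_comm (n : ℝ) c]; exact cancel_aux n hn c x

lemma step1 {l k : ℕ}
    (hstabfin : ∀ (m : ℕ) (σ : X.osimp m), Finite {g : G // X.gAct act hact g σ = σ})
    (f : X.osimp l → X.osimp k → ℝ)
    (Rl : Finset (X.osimp l)) (hRl : X.IsOrbitReps act hact Rl) (σ : X.osimp k) :
    (∑' τ : {τ : X.osimp l // X.OSub τ σ},
        f τ.1 σ / (Nat.card {g : G // X.gAct act hact g σ = σ} : ℝ)) =
      ∑ τ0 ∈ Rl, ∑' g : {g : G // X.OSub (X.gAct act hact g τ0) σ},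
        f (X.gAct act hact g.1 τ0) σ /
          ((Nat.card {g : G // X.gAct act hact g σ = σ} : ℝ) *
            (Nat.card {g : G // X.gAct act hact g τ0 = τ0} : ℝ)) := by
  classical
  haveI F1 : Fintype {τ : X.osimp l // X.OSub τ σ} :=
    @Fintype.ofFinite _ (finite_osub_left X σ)
  haveI FB : ∀ τ0 : X.osimp l, Fintype {g : G // X.OSub (X.gAct act hact g τ0) σ} :=
    fun τ0 => @Fintype.ofFinite _ (finite_B X act hact hstabfin τ0 σ)
  obtain ⟨rep, hrep⟩ : ∃ rep : X.osimp l → X.osimp l,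
      ∀ τ, rep τ ∈ Rl ∧ ∃ g : G, X.gAct act hact g (rep τ) = τ :=
    ⟨fun τ => (hRl τ).exists.choose, fun τ => (hRl τ).exists.choose_spec⟩
  obtain ⟨g0, hg0⟩ : ∃ g0 : X.osimp l → G,
      ∀ τ, X.gAct act hact (g0 τ) (rep τ) = τ :=
    ⟨fun τ => (hrep τ).2.choose, fun τ => (hrep τ).2.choose_spec⟩
  have runiq : ∀ (τ τ0 : X.osimp l), τ0 ∈ Rl →
      (∃ g : G, X.gAct act hact g τ0 = τ) → τ0 = rep τ :=
    fun τ τ0 h1 h2 => (hRl τ).unique ⟨h1, h2⟩ ⟨(hrep τ).1, g0 τ, hg0 τ⟩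
  symm
  calc ∑ τ0 ∈ Rl, ∑' g : {g : G // X.OSub (X.gAct act hact g τ0) σ},
        f (X.gAct act hact g.1 τ0) σ /
          ((Nat.card {g : G // X.gAct act hact g σ = σ} : ℝ) *
            (Nat.card {g : G // X.gAct act hact g τ0 = τ0} : ℝ))
      = ∑ τ0 ∈ Rl, ∑ g : {g : G // X.OSub (X.gAct act hact g τ0) σ},
        f (X.gAct act hact g.1 τ0) σ /
          ((Nat.card {g : G // X.gAct act hact g σ = σ} : ℝ) *
            (Nat.card {g : G // X.gAct act hact g τ0 = τ0} : ℝ)) :=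
        Finset.sum_congr rfl fun τ0 _ => tsum_fintype _
    _ = ∑ t : {x // x ∈ Rl}, ∑ g : {g : G // X.OSub (X.gAct act hact g t.1) σ},
        f (X.gAct act hact g.1 t.1) σ /
          ((Nat.card {g : G // X.gAct act hact g σ = σ} : ℝ) *
            (Nat.card {g : G // X.gAct act hact g t.1 = t.1} : ℝ)) :=
        (Finset.sum_coe_sort Rl _).symm
    _ = ∑ q : Σ t : {x // x ∈ Rl}, {g : G // X.OSub (X.gAct act hact g t.1) σ},
        f (X.gAct act hact q.2.1 q.1.1) σ /
          ((Nat.card {g : G // X.gAct act hact g σ = σ} : ℝ) *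
            (Nat.card {g : G // X.gAct act hact g q.1.1 = q.1.1} : ℝ)) := by
        rw [← Finset.univ_sigma_univ, Finset.sum_sigma]
    _ = ∑ q : Σ t : {x // x ∈ Rl}, {g : G // X.OSub (X.gAct act hact g t.1) σ},
        (fun b : {τ : X.osimp l // X.OSub τ σ} => f b.1 σ /
          ((Nat.card {g : G // X.gAct act hact g σ = σ} : ℝ) *
            (Nat.card {g : G // X.gAct act hact g (rep b.1) = rep b.1} : ℝ)))
          (piMap X act hact Rl σ q) := by
        refine Finset.sum_congr rfl fun q _ => ?_
        show f (X.gAct act hact q.2.1 q.1.1) σ /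
          ((Nat.card {g : G // X.gAct act hact g σ = σ} : ℝ) *
            (Nat.card {g : G // X.gAct act hact g q.1.1 = q.1.1} : ℝ)) =
          f (X.gAct act hact q.2.1 q.1.1) σ /
          ((Nat.card {g : G // X.gAct act hact g σ = σ} : ℝ) *
            (Nat.card {g : G // X.gAct act hact g (rep (X.gAct act hact q.2.1 q.1.1)) =
              rep (X.gAct act hact q.2.1 q.1.1)} : ℝ))
        rw [← runiq _ _ q.1.2 ⟨q.2.1, rfl⟩]
    _ = ∑ b : {τ : X.osimp l // X.OSub τ σ},
        (Nat.card {q // piMap X act hact Rl σ q = b} : ℝ) *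
        ((fun b : {τ : X.osimp l // X.OSub τ σ} => f b.1 σ /
          ((Nat.card {g : G // X.gAct act hact g σ = σ} : ℝ) *
            (Nat.card {g : G // X.gAct act hact g (rep b.1) = rep b.1} : ℝ))) b) :=
        fiber_sum (piMap X act hact Rl σ)
          (fun b : {τ : X.osimp l // X.OSub τ σ} => f b.1 σ /
            ((Nat.card {g : G // X.gAct act hact g σ = σ} : ℝ) *
              (Nat.card {g : G // X.gAct act hact g (rep b.1) = rep b.1} : ℝ)))
    _ = ∑ b : {τ : X.osimp l // X.OSub τ σ},
        f b.1 σ / (Nat.card {g : G // X.gAct act hact g σ = σ} : ℝ) := by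
        refine Finset.sum_congr rfl fun b _ => ?_
        rw [Nat.card_congr (fiber_equiv_l X act hact Rl σ (rep b.1) (hrep b.1).1
          (g0 b.1) b (hg0 b.1) (fun τ0 hm hex => runiq b.1 τ0 hm hex))]
        haveI := hstabfin l (rep b.1)
        haveI : Nonempty {g : G // X.gAct act hact g (rep b.1) = rep b.1} :=
          ⟨⟨1, gAct_one X act hact _⟩⟩
        exact cancel_aux _ Nat.card_pos _ _
    _ = ∑' τ : {τ : X.osimp l // X.OSub τ σ},
        f τ.1 σ / (Nat.card {g : G // X.gAct act hact g σ = σ} : ℝ) :=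
        (tsum_fintype _).symm

lemma step2 {l k : ℕ} (hlf : X.LocallyFinite)
    (hstabfin : ∀ (m : ℕ) (σ : X.osimp m), Finite {g : G // X.gAct act hact g σ = σ})
    (f : X.osimp l → X.osimp k → ℝ)
    (hinv : ∀ (g : G) (τ : X.osimp l) (σ : X.osimp k),
      f (X.gAct act hact g τ) (X.gAct act hact g σ) = f τ σ)
    (Rk : Finset (X.osimp k)) (hRk : X.IsOrbitReps act hact Rk) (τ0 : X.osimp l) :
    (∑ σ ∈ Rk, ∑' g : {g : G // X.OSub (X.gAct act hact g τ0) σ},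
        f (X.gAct act hact g.1 τ0) σ /
          ((Nat.card {g : G // X.gAct act hact g σ = σ} : ℝ) *
            (Nat.card {g : G // X.gAct act hact g τ0 = τ0} : ℝ))) =
      ∑' σ' : {σ : X.osimp k // X.OSub τ0 σ},
        f τ0 σ'.1 / (Nat.card {g : G // X.gAct act hact g τ0 = τ0} : ℝ) := by
  classical
  haveI F2 : Fintype {σ : X.osimp k // X.OSub τ0 σ} :=
    @Fintype.ofFinite _ (finite_osub_right X hlf τ0)
  haveI FB : ∀ σ : X.osimp k, Fintype {g : G // X.OSub (X.gAct act hact g τ0) σ} :=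
    fun σ => @Fintype.ofFinite _ (finite_B X act hact hstabfin τ0 σ)
  obtain ⟨rep, hrep⟩ : ∃ rep : X.osimp k → X.osimp k,
      ∀ τ, rep τ ∈ Rk ∧ ∃ g : G, X.gAct act hact g (rep τ) = τ :=
    ⟨fun τ => (hRk τ).exists.choose, fun τ => (hRk τ).exists.choose_spec⟩
  obtain ⟨g1, hg1⟩ : ∃ g1 : X.osimp k → G,
      ∀ τ, X.gAct act hact (g1 τ) (rep τ) = τ :=
    ⟨fun τ => (hrep τ).2.choose, fun τ => (hrep τ).2.choose_spec⟩
  have runiq : ∀ (τ σ0 : X.osimp k), σ0 ∈ Rk →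
      (∃ g : G, X.gAct act hact g σ0 = τ) → σ0 = rep τ :=
    fun τ σ0 h1 h2 => (hRk τ).unique ⟨h1, h2⟩ ⟨(hrep τ).1, g1 τ, hg1 τ⟩
  calc ∑ σ ∈ Rk, ∑' g : {g : G // X.OSub (X.gAct act hact g τ0) σ},
        f (X.gAct act hact g.1 τ0) σ /
          ((Nat.card {g : G // X.gAct act hact g σ = σ} : ℝ) *
            (Nat.card {g : G // X.gAct act hact g τ0 = τ0} : ℝ))
      = ∑ σ ∈ Rk, ∑ g : {g : G // X.OSub (X.gAct act hact g τ0) σ},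
        f (X.gAct act hact g.1 τ0) σ /
          ((Nat.card {g : G // X.gAct act hact g σ = σ} : ℝ) *
            (Nat.card {g : G // X.gAct act hact g τ0 = τ0} : ℝ)) :=
        Finset.sum_congr rfl fun σ _ => tsum_fintype _
    _ = ∑ s : {x // x ∈ Rk}, ∑ g : {g : G // X.OSub (X.gAct act hact g τ0) s.1},
        f (X.gAct act hact g.1 τ0) s.1 /
          ((Nat.card {g : G // X.gAct act hact g s.1 = s.1} : ℝ) *
            (Nat.card {g : G // X.gAct act hact g τ0 = τ0} : ℝ)) :=
        (Finset.sum_coe_sort Rk _).symm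
    _ = ∑ q : Σ s : {x // x ∈ Rk}, {g : G // X.OSub (X.gAct act hact g τ0) s.1},
        f (X.gAct act hact q.2.1 τ0) q.1.1 /
          ((Nat.card {g : G // X.gAct act hact g q.1.1 = q.1.1} : ℝ) *
            (Nat.card {g : G // X.gAct act hact g τ0 = τ0} : ℝ)) := by
        rw [← Finset.univ_sigma_univ, Finset.sum_sigma]
    _ = ∑ q : Σ s : {x // x ∈ Rk}, {g : G // X.OSub (X.gAct act hact g τ0) s.1},
        (fun b : {σ : X.osimp k // X.OSub τ0 σ} => f τ0 b.1 /
          ((Nat.card {g : G // X.gAct act hact g (rep b.1) = rep b.1} : ℝ) *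
            (Nat.card {g : G // X.gAct act hact g τ0 = τ0} : ℝ)))
          (rhoMap X act hact Rk τ0 q) := by
        refine Finset.sum_congr rfl fun q _ => ?_
        have e1 : f (X.gAct act hact q.2.1 τ0) q.1.1 =
            f τ0 (X.gAct act hact q.2.1⁻¹ q.1.1) := by
          have h := hinv q.2.1 τ0 (X.gAct act hact q.2.1⁻¹ q.1.1)
          rw [gAct_inv_right] at h
          exact h
        have e2 : q.1.1 = rep (X.gAct act hact q.2.1⁻¹ q.1.1) :=
          runiq _ _ q.1.2 ⟨q.2.1⁻¹, rfl⟩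
        show f (X.gAct act hact q.2.1 τ0) q.1.1 /
          ((Nat.card {g : G // X.gAct act hact g q.1.1 = q.1.1} : ℝ) *
            (Nat.card {g : G // X.gAct act hact g τ0 = τ0} : ℝ)) =
          f τ0 (X.gAct act hact q.2.1⁻¹ q.1.1) /
          ((Nat.card {g : G // X.gAct act hact g (rep (X.gAct act hact q.2.1⁻¹ q.1.1)) =
              rep (X.gAct act hact q.2.1⁻¹ q.1.1)} : ℝ) *
            (Nat.card {g : G // X.gAct act hact g τ0 = τ0} : ℝ))
        rw [e1, ← e2]
    _ = ∑ b : {σ : X.osimp k // X.OSub τ0 σ},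
        (Nat.card {q // rhoMap X act hact Rk τ0 q = b} : ℝ) *
        ((fun b : {σ : X.osimp k // X.OSub τ0 σ} => f τ0 b.1 /
          ((Nat.card {g : G // X.gAct act hact g (rep b.1) = rep b.1} : ℝ) *
            (Nat.card {g : G // X.gAct act hact g τ0 = τ0} : ℝ))) b) :=
        fiber_sum (rhoMap X act hact Rk τ0)
          (fun b : {σ : X.osimp k // X.OSub τ0 σ} => f τ0 b.1 /
            ((Nat.card {g : G // X.gAct act hact g (rep b.1) = rep b.1} : ℝ) *
              (Nat.card {g : G // X.gAct act hact g τ0 = τ0} : ℝ)))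
    _ = ∑ b : {σ : X.osimp k // X.OSub τ0 σ},
        f τ0 b.1 / (Nat.card {g : G // X.gAct act hact g τ0 = τ0} : ℝ) := by
        refine Finset.sum_congr rfl fun b _ => ?_
        rw [Nat.card_congr (fiber_equiv_k X act hact Rk τ0 (rep b.1) (hrep b.1).1
          (g1 b.1) b (hg1 b.1) (fun σ0 hm hex => runiq b.1 σ0 hm hex))]
        haveI := hstabfin k (rep b.1)
        haveI : Nonempty {g : G // X.gAct act hact g (rep b.1) = rep b.1} :=
          ⟨⟨1, gAct_one X act hact _⟩⟩
        exact cancel_aux' _ Nat.card_pos _ _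
    _ = ∑' σ' : {σ : X.osimp k // X.OSub τ0 σ},
        f τ0 σ'.1 / (Nat.card {g : G // X.gAct act hact g τ0 = τ0} : ℝ) :=
        (tsum_fintype _).symm

end DCAux

open SComplex in
/-- Discrete double-counting (Lemma 1.3 of Ballmann–Świątkowski): for a group `G`
acting simplicially with finite stabilizers on a locally finite simplicial complex,
a `G`-invariant function `f(τ,σ)` on pairs of an ordered `l`-simplex contained in an
ordered `k`-simplex satisfies the weighted orbit-sum identity. -/
theorem double_counting_discrete {V : Type*} [DecidableEq V] (X : SComplex V)
    (hlf : X.LocallyFinite) {G : Type*} [Group G]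
    (act : G →* Equiv.Perm V) (hact : ∀ g : G, act g ∈ X.aut)
    (hstabfin : ∀ (k : ℕ) (σ : X.osimp k), Finite {g : G // X.gAct act hact g σ = σ})
    (l k : ℕ) (hlk : l < k)
    (f : X.osimp l → X.osimp k → ℝ)
    (hinv : ∀ (g : G) (τ : X.osimp l) (σ : X.osimp k),
      f (X.gAct act hact g τ) (X.gAct act hact g σ) = f τ σ)
    (Rk : Finset (X.osimp k)) (hRk : X.IsOrbitReps act hact Rk)
    (Rl : Finset (X.osimp l)) (hRl : X.IsOrbitReps act hact Rl) :
    ∑ σ ∈ Rk, ∑' τ : {τ : X.osimp l // X.OSub τ σ},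
        f τ.1 σ / (Nat.card {g : G // X.gAct act hact g σ = σ}) =
      ∑ τ ∈ Rl, ∑' σ : {σ : X.osimp k // X.OSub τ σ},
        f τ σ.1 / (Nat.card {g : G // X.gAct act hact g τ = τ}) := by
  calc ∑ σ ∈ Rk, ∑' τ : {τ : X.osimp l // X.OSub τ σ},
        f τ.1 σ / (Nat.card {g : G // X.gAct act hact g σ = σ} : ℝ)
      = ∑ σ ∈ Rk, ∑ τ0 ∈ Rl, ∑' g : {g : G // X.OSub (X.gAct act hact g τ0) σ},
        f (X.gAct act hact g.1 τ0) σ /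
          ((Nat.card {g : G // X.gAct act hact g σ = σ} : ℝ) *
            (Nat.card {g : G // X.gAct act hact g τ0 = τ0} : ℝ)) :=
        Finset.sum_congr rfl fun σ _ => step1 X act hact hstabfin f Rl hRl σ
    _ = ∑ τ0 ∈ Rl, ∑ σ ∈ Rk, ∑' g : {g : G // X.OSub (X.gAct act hact g τ0) σ},
        f (X.gAct act hact g.1 τ0) σ /
          ((Nat.card {g : G // X.gAct act hact g σ = σ} : ℝ) *
            (Nat.card {g : G // X.gAct act hact g τ0 = τ0} : ℝ)) :=
        Finset.sum_comm
    _ = ∑ τ ∈ Rl, ∑' σ : {σ : X.osimp k // X.OSub τ σ},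
        f τ σ.1 / (Nat.card {g : G // X.gAct act hact g τ = τ} : ℝ) :=
        Finset.sum_congr rfl fun τ0 _ => step2 X act hact hlf hstabfin f hinv Rk hRk τ0
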